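/- Let λ ∈ (0,1) with ternary expansion λ = Σ_{i≥1} l_i 3^{-i}, l_i ∈ {0,1,2}, and for k ≥ 0 set λ_k = Σ_{i≥1} l_{i+k} 3^{-i} (so λ_0 = λ). Then for every k ≥ 0 and every x ∈ ℝ², F_4(F_3^k(x)) = (F_3∘F_{l_1}∘⋯∘F_{l_k})(x − (1/2, √3/2) + (λ_k, 0)); equivalently, the map (F_3∘F_{l_1}∘⋯∘F_{l_k})^{-1}∘F_4∘F_3^k is the translation x ↦ x − (1/2, √3/2) + (λ_k, 0). -/
import Mathlib


open Set

noncomputable section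

/-- The IFS of the `λ`-gasket with moving slider: `F_0(x) = x/3`,
`F_1(x) = x/3 + (1/3,0)`, `F_2(x) = x/3 + (2/3,0)`, `F_3(x) = x/3 + (1/3,√3/3)`,
`F_4(x) = x/3 + (1/6 + λ/3, √3/6)`. -/
def Kf (lam : ℝ) : Fin 5 → ℝ × ℝ → ℝ × ℝ := fun i x =>
  (1/3 : ℝ) • x +
    ![((0 : ℝ), (0 : ℝ)), (1/3, 0), (2/3, 0), (1/3, Real.sqrt 3 / 3),
      (1/6 + lam/3, Real.sqrt 3 / 6)] i

/-- `F_{l_1} ∘ ⋯ ∘ F_{l_k}` (applying `F_{l_k}` first), where `l i` is the digit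
`l_{i+1}`. -/
def Fcomp {α : Type*} {N : ℕ} (F : Fin N → α → α) (l : ℕ → Fin N) : ℕ → α → α
  | 0 => id
  | k + 1 => Fcomp F l k ∘ F (l k)

lemma sumlam (dgt : ℕ → Fin 5) (k : ℕ) :
    Summable fun i : ℕ => ((dgt (i + k) : ℕ) : ℝ) / 3 ^ (i + 1) := by
  have hg : Summable (fun i : ℕ => (4 : ℝ) * (1/3 : ℝ) ^ i) :=
    (summable_geometric_of_lt_one (by norm_num) (by norm_num)).mul_left 4
  refine hg.of_nonneg_of_le (fun i => by positivity) (fun i => ?_)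
  have hb : ((dgt (i + k) : ℕ) : ℝ) ≤ 4 := by
    have := (dgt (i + k)).isLt
    exact_mod_cast Nat.le_of_lt_succ this
  rw [div_le_iff₀ (by positivity)]
  calc ((dgt (i + k) : ℕ) : ℝ) ≤ 4 := hb
    _ ≤ 4 * (1/3) ^ i * 3 ^ (i + 1) := by
        rw [pow_succ, div_pow, one_pow, one_div, mul_assoc,
          ← mul_assoc ((3:ℝ)^i)⁻¹, inv_mul_cancel₀ (by positivity : (3:ℝ)^i ≠ 0)]
        norm_num

lemma lamrec (dgt : ℕ → Fin 5) (k : ℕ) :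
    (∑' i : ℕ, ((dgt (i + k) : ℕ) : ℝ) / 3 ^ (i + 1))
      = ((dgt k : ℕ) : ℝ) / 3 + (∑' i : ℕ, ((dgt (i + (k+1)) : ℕ) : ℝ) / 3 ^ (i + 1)) / 3 := by
  rw [Summable.tsum_eq_zero_add (sumlam dgt k)]
  simp only [zero_add, pow_one]
  congr 1
  rw [← tsum_div_const]
  congr 1 with i
  have : i + 1 + k = i + (k + 1) := by omega
  rw [this, pow_succ]
  ring

/-- **Appendix, Example 2 (computation).** Let `λ ∈ (0,1)` have ternary expansion
`λ = Σ_{i≥1} l_i 3^{-i}` with digits `l_i ∈ {0,1,2}` (here `dgt i = l_{i+1}`), and set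
`λ_k = Σ_{i≥1} l_{i+k} 3^{-i}`. Then for every `k ≥ 0` and every `x ∈ ℝ²`,
`F_4(F_3^k(x)) = (F_3 ∘ F_{l_1} ∘ ⋯ ∘ F_{l_k})(x − (1/2, √3/2) + (λ_k, 0))`;
equivalently, `(F_3∘F_{l_1}∘⋯∘F_{l_k})^{-1}∘F_4∘F_3^k` is the translation
`x ↦ x − (1/2, √3/2) + (λ_k, 0)`. -/
theorem stmt19 (lam : ℝ) (h0 : 0 < lam) (h1 : lam < 1)
    (dgt : ℕ → Fin 5) (hdgt : ∀ i, (dgt i : ℕ) ≤ 2)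
    (hlam : lam = ∑' i : ℕ, ((dgt i : ℕ) : ℝ) / 3 ^ (i + 1)) :
    ∀ (k : ℕ) (x : ℝ × ℝ),
      Kf lam 4 ((Kf lam 3)^[k] x)
        = Kf lam 3 (Fcomp (Kf lam) dgt k
            (x - (1/2, Real.sqrt 3 / 2)
               + ((∑' i : ℕ, ((dgt (i + k) : ℕ) : ℝ) / 3 ^ (i + 1)), 0))) := by
  intro k
  induction k with
  | zero =>
      intro x
      simp only [Function.iterate_zero, id, Fcomp, Nat.add_zero]
      rw [← hlam]
      simp only [Kf, Matrix.cons_val_four, Matrix.cons_val_three, Matrix.cons_val_succ,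
        Matrix.cons_val_zero, Matrix.cons_val_one, Matrix.head_cons]
      ext <;> simp [Prod.fst, Prod.snd, Prod.smul_def, smul_eq_mul] <;> ring
  | succ k ih =>
      intro x
      rw [Function.iterate_succ_apply, ih (Kf lam 3 x)]
      show _ = Kf lam 3 (Fcomp (Kf lam) dgt k (Kf lam (dgt k) _))
      congr 1
      congr 1
      -- goal: Kf lam 3 x - c + (λ_k,0) = Kf lam (dgt k) (x - c + (λ_{k+1},0))
      have hd := hdgt k
      have hcast : ((dgt k : ℕ) : ℝ) = 0 ∨ ((dgt k : ℕ) : ℝ) = 1 ∨ ((dgt k : ℕ) : ℝ) = 2 := by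
        interval_cases h : (dgt k : ℕ) <;> simp
      have hKd : ∀ y : ℝ × ℝ, Kf lam (dgt k) y = (1/3 : ℝ) • y + (((dgt k : ℕ) : ℝ)/3, 0) := by
        intro y
        have h012 : dgt k = 0 ∨ dgt k = 1 ∨ dgt k = 2 := by
          have : (dgt k : ℕ) = 0 ∨ (dgt k : ℕ) = 1 ∨ (dgt k : ℕ) = 2 := by omega
          rcases this with h | h | h
          · left; exact Fin.ext (by simp [h])
          · right; left; exact Fin.ext (by simp [h])
          · right; right; exact Fin.ext (by simp [h])
        rcases h012 with h | h | h <;> rw [h] <;> simp [Kf] <;> norm_num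
      rw [hKd, lamrec dgt k]
      simp only [Kf, Matrix.cons_val_three, Matrix.cons_val_succ, Matrix.cons_val_zero,
        Matrix.cons_val_one, Matrix.head_cons]
      ext <;> simp [Prod.smul_def, smul_eq_mul] <;> ring
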